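/- If F : X × X × X → F is a diagonal function (its support is {(x, σ(x), τ(x)) : x ∈ X} for bijections σ, τ of X, with all values on the support nonzero), then slicerank(F) = |X|. -/

import Mathlib

open Finset

/-- A slice term is a function of three variables that factors as a
function of two of the variables times a function of the remaining one. -/
def IsSliceTerm {X Y Z 𝔽 : Type*} [Field 𝔽] (t : X → Y → Z → 𝔽) : Prop :=
  (∃ (f : X → Y → 𝔽) (g : Z → 𝔽), ∀ x y z, t x y z = f x y * g z) ∨
  (∃ (f : X → Z → 𝔽) (g : Y → 𝔽), ∀ x y z, t x y z = f x z * g y) ∨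
  (∃ (f : Y → Z → 𝔽) (g : X → 𝔽), ∀ x y z, t x y z = f y z * g x)

/-- The slice rank of a function `X × Y × Z → 𝔽`: the least number of slice
terms needed to express it. -/
noncomputable def sliceRank {X Y Z 𝔽 : Type*} [Field 𝔽] (T : X → Y → Z → 𝔽) : ℕ :=
  sInf {k | ∃ t : Fin k → X → Y → Z → 𝔽,
    (∀ i, IsSliceTerm (t i)) ∧ ∀ x y z, T x y z = ∑ i, t i x y z}

/-- The tensor rank of a function `X × Y × Z → 𝔽`. -/
noncomputable def tensorRank {X Y Z 𝔽 : Type*} [Field 𝔽] (T : X → Y → Z → 𝔽) : ℕ :=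
  sInf {k | ∃ (f : Fin k → X → 𝔽) (g : Fin k → Y → 𝔽) (h : Fin k → Z → 𝔽),
    ∀ x y z, T x y z = ∑ i, f i x * g i y * h i z}

/-- The triangle rank of a function `X × Y × Z → 𝔽`. -/
noncomputable def triangleRank {X Y Z 𝔽 : Type*} [Field 𝔽] (T : X → Y → Z → 𝔽) : ℕ :=
  sInf {k | ∃ (f : Fin k → X → 𝔽) (g : Fin k → Y → 𝔽) (h : Fin k → Z → 𝔽)
      (r : Fin k → Fin k → Fin k → 𝔽),
    ∀ x y z, T x y z = ∑ a : Fin k, ∑ b : Fin k, ∑ c : Fin k,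
      if (a : ℕ) + (b : ℕ) + (c : ℕ) < k then r a b c * f a x * g b y * h c z else 0}

section Aux
open Module

-- A finite-dimensional subspace of 𝔽^X contains a vector whose support has
-- at least `finrank` elements.
lemma exists_mem_card_support_ge {X 𝔽 : Type*} [Fintype X] [DecidableEq X] [Field 𝔽] [DecidableEq 𝔽]
    (W : Submodule 𝔽 (X → 𝔽)) :
    ∃ h ∈ W, finrank 𝔽 W ≤ (Finset.univ.filter (fun x => h x ≠ 0)).card := by
  classical
  set S : Set ℕ := {c | ∃ h ∈ W, (Finset.univ.filter (fun x => h x ≠ 0)).card = c} with hS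
  have hne : S.Nonempty := ⟨_, 0, W.zero_mem, rfl⟩
  have hbdd : BddAbove S := by
    refine ⟨Fintype.card X, fun c hc => ?_⟩
    obtain ⟨h, _, rfl⟩ := hc
    exact (Finset.card_filter_le _ _).trans (by simp)
  obtain ⟨h, hhW, hhm⟩ := Nat.sSup_mem hne hbdd
  set A : Finset X := Finset.univ.filter (fun x => h x ≠ 0) with hA
  refine ⟨h, hhW, ?_⟩
  -- restriction to A is injective on W
  have hinj : Function.Injective
      ((LinearMap.funLeft 𝔽 𝔽 (Subtype.val : {x // x ∈ A} → X)).comp W.subtype) := by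
    rw [← LinearMap.ker_eq_bot, LinearMap.ker_eq_bot']
    intro ⟨w, hwW⟩ hw0
    have hwA : ∀ x ∈ A, w x = 0 := by
      intro x hx
      have := congrFun hw0 ⟨x, hx⟩
      simpa using this
    ext
    by_contra hw
    have hwne : w ≠ 0 := fun h0 => hw (by simp [h0])
    -- h + w has strictly bigger support
    have hsub : A ∪ (Finset.univ.filter fun x => w x ≠ 0) ⊆
        Finset.univ.filter (fun x => (h + w) x ≠ 0) := by
      intro x hx
      simp only [Finset.mem_union, hA, Finset.mem_filter, Finset.mem_univ, true_and] at hx ⊢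
      rcases hx with hx | hx
      · have := hwA x (by simp [hA, hx])
        simp [Pi.add_apply, this, hx]
      · have hx' : h x = 0 := by
          by_contra hh
          exact hx (hwA x (by simp [hA, hh]))
        simp [Pi.add_apply, hx', hx]
    have hdisj : Disjoint A (Finset.univ.filter fun x => w x ≠ 0) := by
      rw [Finset.disjoint_left]
      intro x hx hx'
      simp only [Finset.mem_filter, Finset.mem_univ, true_and] at hx'
      exact hx' (hwA x hx)
    have hwsupp : 0 < (Finset.univ.filter fun x => w x ≠ 0).card := by
      rw [Finset.card_pos]
      obtain ⟨x, hx⟩ := Function.ne_iff.mp hwne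
      exact ⟨x, by simpa using hx⟩
    have hle : (Finset.univ.filter (fun x => (h + w) x ≠ 0)).card ≤ sSup S :=
      le_csSup hbdd ⟨h + w, W.add_mem hhW hwW, rfl⟩
    have := Finset.card_le_card hsub
    rw [Finset.card_union_of_disjoint hdisj] at this
    omega
  have := LinearMap.finrank_le_finrank_of_injective hinj
  simpa using this

lemma rank_add_le' {n 𝔽 : Type*} [Fintype n] [Field 𝔽] (A B : Matrix n n 𝔽) :
    (A + B).rank ≤ A.rank + B.rank := by
  classical
  have hr : LinearMap.range (A + B).mulVecLin ≤
      LinearMap.range A.mulVecLin ⊔ LinearMap.range B.mulVecLin := by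
    rintro _ ⟨v, rfl⟩
    exact Submodule.mem_sup.mpr ⟨A.mulVecLin v, ⟨v, rfl⟩, B.mulVecLin v, ⟨v, rfl⟩, by
      simp [Matrix.add_mulVec]⟩
  calc (A + B).rank ≤ finrank 𝔽 ↥(LinearMap.range A.mulVecLin ⊔ LinearMap.range B.mulVecLin) :=
        Submodule.finrank_mono hr
    _ ≤ A.rank + B.rank := Submodule.finrank_add_le_finrank_add_finrank _ _

lemma rank_vecMulVec_le {n 𝔽 : Type*} [Fintype n] [DecidableEq n] [Field 𝔽] (u v : n → 𝔽) :
    (Matrix.vecMulVec u v).rank ≤ 1 := by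
  classical
  have hr : LinearMap.range (Matrix.vecMulVec u v).mulVecLin ≤ Submodule.span 𝔽 {u} := by
    rintro _ ⟨w, rfl⟩
    have : (Matrix.vecMulVec u v).mulVec w = (∑ y, v y * w y) • u := by
      funext x
      simp only [Matrix.mulVec, Matrix.vecMulVec_apply, dotProduct, Pi.smul_apply,
        smul_eq_mul, Finset.sum_mul]
      exact Finset.sum_congr rfl fun y _ => by ring
    rw [Matrix.mulVecLin_apply, this]
    exact Submodule.smul_mem _ _ (Submodule.mem_span_singleton_self u)
  calc (Matrix.vecMulVec u v).rank ≤ finrank 𝔽 ↥(Submodule.span 𝔽 {u}) :=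
        Submodule.finrank_mono hr
    _ ≤ 1 := by
        simpa using finrank_span_le_card ({u} : Set (n → 𝔽))

lemma rank_sum_le' {n 𝔽 ι : Type*} [Fintype n] [Field 𝔽] (s : Finset ι) (M : ι → Matrix n n 𝔽) :
    (∑ i ∈ s, M i).rank ≤ ∑ i ∈ s, (M i).rank := by
  classical
  induction s using Finset.induction with
  | empty => simp
  | insert _ _ hi ih =>
    rename_i a s'
    rw [Finset.sum_insert hi, Finset.sum_insert hi]
    exact (rank_add_le' _ _).trans (by omega)

lemma lower_bound {X 𝔽 : Type*} [Fintype X] [Field 𝔽]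
    (F : X → X → X → 𝔽) (σ τ : Equiv.Perm X)
    (hsupp : ∀ x y z, F x y z ≠ 0 ↔ (y = σ x ∧ z = τ x))
    {k : ℕ} (t : Fin k → X → X → X → 𝔽) (hterm : ∀ i, IsSliceTerm (t i))
    (hsum : ∀ x y z, F x y z = ∑ i, t i x y z) :
    Fintype.card X ≤ k := by
  classical
  by_contra hlt
  push_neg at hlt
  set n := Fintype.card X with hn
  set p : Fin k → Prop := fun i => ∃ (f : X → X → 𝔽) (g : X → 𝔽),
      ∀ x y z, t i x y z = f x y * g z with hp
  set q : Fin k → Prop := fun i => ∃ (f : X → X → 𝔽) (g : X → 𝔽),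
      ∀ x y z, t i x y z = f x z * g y with hq
  set A : Finset (Fin k) := Finset.univ.filter p with hA
  set B : Finset (Fin k) := Finset.univ.filter (fun i => ¬ p i ∧ q i) with hB
  set C : Finset (Fin k) := Finset.univ.filter (fun i => ¬ p i ∧ ¬ q i) with hC
  -- choice of factorizations
  have h1 : ∀ i, ∃ (f : X → X → 𝔽) (g : X → 𝔽), i ∈ A →
      ∀ x y z, t i x y z = f x y * g z := by
    intro i
    by_cases hi : p i
    · obtain ⟨f, g, hfg⟩ := hi; exact ⟨f, g, fun _ => hfg⟩
    · exact ⟨0, 0, fun hiA => absurd (Finset.mem_filter.mp hiA).2 hi⟩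
  have h2 : ∀ i, ∃ (f : X → X → 𝔽) (g : X → 𝔽), i ∈ B →
      ∀ x y z, t i x y z = f x z * g y := by
    intro i
    by_cases hi : q i
    · obtain ⟨f, g, hfg⟩ := hi; exact ⟨f, g, fun _ => hfg⟩
    · exact ⟨0, 0, fun hiB => absurd (Finset.mem_filter.mp hiB).2.2 hi⟩
  have h3 : ∀ i, ∃ (f : X → X → 𝔽) (g : X → 𝔽), i ∈ C →
      ∀ x y z, t i x y z = f y z * g x := by
    intro i
    rcases hterm i with hi | hi | hi
    · exact ⟨0, 0, fun hiC => absurd hi (Finset.mem_filter.mp hiC).2.1⟩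
    · exact ⟨0, 0, fun hiC => absurd hi (Finset.mem_filter.mp hiC).2.2⟩
    · obtain ⟨f, g, hfg⟩ := hi; exact ⟨f, g, fun _ => hfg⟩
  choose f1 g1 hf1 using h1
  choose f2 g2 hf2 using h2
  choose f3 g3 hf3 using h3
  -- the annihilator subspace
  set L : (X → 𝔽) →ₗ[𝔽] ({i // i ∈ C} → 𝔽) :=
    { toFun := fun v j => ∑ x, v x * g3 j.1 x
      map_add' := by
        intro v w; funext j; simp [add_mul, Finset.sum_add_distrib]
      map_smul' := by
        intro c v; funext j; simp [Finset.mul_sum, mul_assoc] } with hL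
  set W := LinearMap.ker L with hW
  have hrange : finrank 𝔽 (LinearMap.range L) ≤ C.card := by
    have := Submodule.finrank_le (LinearMap.range L)
    simpa [Module.finrank_pi, Fintype.card_coe] using this
  have hrn : finrank 𝔽 (LinearMap.range L) + finrank 𝔽 W = n := by
    rw [hW]
    simpa [Module.finrank_pi] using LinearMap.finrank_range_add_finrank_ker L
  obtain ⟨h, hhW, hhcard⟩ := exists_mem_card_support_ge W
  set Ah : Finset X := Finset.univ.filter (fun x => h x ≠ 0) with hAh
  have hLh : ∀ i (hi : i ∈ C), ∑ x, h x * g3 i x = 0 := by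
    intro i hi
    have := LinearMap.mem_ker.mp hhW
    exact congrFun this ⟨i, hi⟩
  -- the matrix
  set M : Matrix X X 𝔽 := Matrix.of fun y z => ∑ x, h x * F x y z with hM
  -- diagonal structure
  have hdiag : M.submatrix σ τ = Matrix.diagonal (fun x => h x * F x (σ x) (τ x)) := by
    ext x x'
    by_cases hxx : x = x'
    · subst hxx
      simp only [Matrix.submatrix_apply, Matrix.diagonal_apply_eq, hM, Matrix.of_apply]
      refine Finset.sum_eq_single x (fun x'' _ hne => ?_) (by simp)
      by_contra hc
      have hFne : F x'' (σ x) (τ x) ≠ 0 := fun h0 => hc (by rw [h0, mul_zero])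
      obtain ⟨hy, _⟩ := (hsupp _ _ _).mp hFne
      exact hne (σ.injective hy).symm
    · simp only [Matrix.submatrix_apply, Matrix.diagonal_apply_ne _ hxx, hM, Matrix.of_apply]
      refine Finset.sum_eq_zero (fun x'' _ => ?_)
      by_contra hc
      have hFne : F x'' (σ x) (τ x') ≠ 0 := fun h0 => hc (by rw [h0, mul_zero])
      obtain ⟨hy, hz⟩ := (hsupp _ _ _).mp hFne
      exact hxx ((σ.injective hy).trans (τ.injective hz).symm)
  have hrankM : M.rank = Ah.card := by
    have hr1 : M.rank = (M.submatrix ⇑σ ⇑τ).rank := (Matrix.rank_submatrix M σ τ).symm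
    rw [hr1, hdiag, Matrix.rank_diagonal]
    rw [Fintype.card_subtype]
    congr 1
    apply Finset.filter_congr
    intro x _
    have hF : F x (σ x) (τ x) ≠ 0 := (hsupp x _ _).mpr ⟨rfl, rfl⟩
    simp [mul_ne_zero_iff, hF]
  -- low rank structure
  have hdecomp : M = (∑ i ∈ A, Matrix.vecMulVec (fun y => ∑ x, h x * f1 i x y) (g1 i))
      + (∑ i ∈ B, Matrix.vecMulVec (g2 i) (fun z => ∑ x, h x * f2 i x z)) := by
    ext y z
    simp only [Matrix.add_apply, Matrix.sum_apply, Matrix.vecMulVec_apply, hM, Matrix.of_apply]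
    have step1 : ∑ x, h x * F x y z = ∑ i, ∑ x, h x * t i x y z := by
      rw [Finset.sum_comm]
      exact Finset.sum_congr rfl fun x _ => by rw [hsum, Finset.mul_sum]
    rw [step1]
    have hsplit : (Finset.univ : Finset (Fin k)) = A ∪ (B ∪ C) := by
      ext i
      by_cases hpi : p i <;> by_cases hqi : q i <;>
        simp [hA, hB, hC, hpi, hqi]
    have hdAB : Disjoint A (B ∪ C) := by
      rw [Finset.disjoint_left]
      intro i hi hi'
      simp only [hA, Finset.mem_filter, Finset.mem_univ, true_and] at hi
      rcases Finset.mem_union.mp hi' with hi' | hi' <;>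
        exact (Finset.mem_filter.mp hi').2.1 hi
    have hdBC : Disjoint B C := by
      rw [Finset.disjoint_left]
      intro i hi hi'
      exact (Finset.mem_filter.mp hi').2.2 (Finset.mem_filter.mp hi).2.2
    rw [hsplit, Finset.sum_union hdAB, Finset.sum_union hdBC]
    have hCzero : ∑ i ∈ C, ∑ x, h x * t i x y z = 0 := by
      refine Finset.sum_eq_zero fun i hi => ?_
      calc ∑ x, h x * t i x y z = ∑ x, f3 i y z * (h x * g3 i x) := by
            refine Finset.sum_congr rfl fun x _ => ?_
            rw [hf3 i hi]; ring
        _ = f3 i y z * ∑ x, h x * g3 i x := by rw [Finset.mul_sum]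
        _ = 0 := by rw [hLh i hi, mul_zero]
    have hAeq : ∑ i ∈ A, ∑ x, h x * t i x y z
        = ∑ i ∈ A, (∑ x, h x * f1 i x y) * g1 i z := by
      refine Finset.sum_congr rfl fun i hi => ?_
      rw [Finset.sum_mul]
      refine Finset.sum_congr rfl fun x _ => ?_
      rw [hf1 i hi]; ring
    have hBeq : ∑ i ∈ B, ∑ x, h x * t i x y z
        = ∑ i ∈ B, g2 i y * (∑ x, h x * f2 i x z) := by
      refine Finset.sum_congr rfl fun i hi => ?_
      rw [Finset.mul_sum]
      refine Finset.sum_congr rfl fun x _ => ?_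
      rw [hf2 i hi]; ring
    rw [hCzero, hAeq, hBeq, add_zero]
  have hrankle : M.rank ≤ A.card + B.card := by
    rw [hdecomp]
    refine (rank_add_le' _ _).trans (add_le_add ?_ ?_)
    · exact (rank_sum_le' _ _).trans <| (Finset.sum_le_card_nsmul _ _ 1
        (fun i _ => rank_vecMulVec_le _ _)).trans (by simp)
    · exact (rank_sum_le' _ _).trans <| (Finset.sum_le_card_nsmul _ _ 1
        (fun i _ => rank_vecMulVec_le _ _)).trans (by simp)
  -- counting
  have hcardsum : A.card + B.card + C.card ≤ k := by
    have hd1 : Disjoint A B := by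
      rw [Finset.disjoint_left]
      intro i hi hi'
      exact (Finset.mem_filter.mp hi').2.1 (Finset.mem_filter.mp hi).2
    have hd2 : Disjoint (A ∪ B) C := by
      rw [Finset.disjoint_left]
      intro i hi hi'
      rcases Finset.mem_union.mp hi with hi | hi
      · exact (Finset.mem_filter.mp hi').2.1 (Finset.mem_filter.mp hi).2
      · exact (Finset.mem_filter.mp hi').2.2 (Finset.mem_filter.mp hi).2.2
    calc A.card + B.card + C.card = ((A ∪ B) ∪ C).card := by
          rw [Finset.card_union_of_disjoint hd2, Finset.card_union_of_disjoint hd1]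
      _ ≤ (Finset.univ : Finset (Fin k)).card := Finset.card_le_card (Finset.subset_univ _)
      _ = k := by simp
  have hfin : finrank 𝔽 W ≤ Ah.card := hhcard
  rw [hrankM] at hrankle
  omega

lemma upper_mem {X 𝔽 : Type*} [Fintype X] [Field 𝔽] (F : X → X → X → 𝔽) :
    Fintype.card X ∈ {k | ∃ t : Fin k → X → X → X → 𝔽,
      (∀ i, IsSliceTerm (t i)) ∧ ∀ x y z, F x y z = ∑ i, t i x y z} := by
  classical
  set e : Fin (Fintype.card X) ≃ X := (Fintype.equivFin X).symm with he
  refine ⟨fun i x y z => F (e i) y z * (if x = e i then 1 else 0), fun i => ?_, ?_⟩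
  · exact Or.inr (Or.inr ⟨fun y z => F (e i) y z, fun x => if x = e i then 1 else 0,
      fun x y z => rfl⟩)
  · intro x y z
    rw [Fintype.sum_equiv e _ (fun x' => F x' y z * (if x = x' then 1 else 0))
      (fun i => rfl)]
    simp

end Aux

/-- If `F : X × X × X → 𝔽` is a diagonal (its support is
`{(x, σ x, τ x) : x ∈ X}` for bijections `σ, τ` of `X`, with all values on the
support nonzero), then `slicerank F = |X|`. -/
theorem sliceRank_of_diagonal {X 𝔽 : Type*} [Fintype X] [Field 𝔽]
    (F : X → X → X → 𝔽) (σ τ : Equiv.Perm X)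
    (hsupp : ∀ x y z, F x y z ≠ 0 ↔ (y = σ x ∧ z = τ x)) :
    sliceRank F = Fintype.card X := by
  refine le_antisymm (Nat.sInf_le (upper_mem F)) ?_
  refine le_csInf ⟨_, upper_mem F⟩ ?_
  rintro k ⟨t, hterm, hsum⟩
  exact lower_bound F σ τ hsupp t hterm hsum
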